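/- Let (S_n)_{n≥0} be a random walk with i.i.d. real increments of positive finite mean, and let σ = inf{n ≥ 0 : S_n > 0} be the first strict ascending ladder epoch. Then E[(S_1^+)²] < ∞ if and only if E[S_σ²] < ∞. -/

import Mathlib

open MeasureTheory ProbabilityTheory
open scoped ENNReal

open Classical in
lemma wald_pointwise (x : ℕ → ℝ) (c : ℝ) (hc : 0 ≤ c) (hx : ∀ i, x i ≤ c) (N : ℕ) :
    ∑ n ∈ Finset.Icc 1 N, x (n - 1) *
      (if ∀ k, 0 < k → k < n → (∑ i ∈ Finset.range k, x i) ≤ 0 then (1 : ℝ) else 0) ≤ c := by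
  induction N with
  | zero => simpa using hc
  | succ N ih =>
    rw [Finset.sum_Icc_succ_top (by omega)]
    by_cases h : ∀ k, 0 < k → k < N + 1 → (∑ i ∈ Finset.range k, x i) ≤ 0
    · have hall : ∀ n ∈ Finset.Icc 1 (N + 1), x (n - 1) *
          (if ∀ k, 0 < k → k < n → (∑ i ∈ Finset.range k, x i) ≤ 0 then (1 : ℝ) else 0)
          = x (n - 1) := by
        intro n hn
        rw [Finset.mem_Icc] at hn
        rw [if_pos fun k hk hkn => h k hk (by omega), mul_one]
      have h1 : ∑ n ∈ Finset.Icc 1 N, x (n - 1) *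
          (if ∀ k, 0 < k → k < n → (∑ i ∈ Finset.range k, x i) ≤ 0 then (1 : ℝ) else 0)
          = ∑ n ∈ Finset.Icc 1 N, x (n - 1) :=
        Finset.sum_congr rfl fun n hn => hall n (Finset.mem_Icc.2 (by
          rw [Finset.mem_Icc] at hn; omega))
      rw [h1, hall (N + 1) (Finset.mem_Icc.2 (by omega))]
      have h2 : ∀ M : ℕ, ∑ n ∈ Finset.Icc 1 M, x (n - 1) = ∑ i ∈ Finset.range M, x i := by
        intro M
        induction M with
        | zero => simp
        | succ M ihM => rw [Finset.sum_Icc_succ_top (by omega), ihM, Finset.sum_range_succ]; simp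
      rw [h2 N]
      have h3 : ∑ i ∈ Finset.range N, x i ≤ 0 := by
        rcases Nat.eq_zero_or_pos N with hN | hN
        · simp [hN]
        · exact h N hN (by omega)
      have := hx N
      simp only [Nat.add_sub_cancel]
      linarith
    · rw [if_neg (by intro h'; exact h fun k hk hkn => h' k hk hkn), mul_zero, add_zero]
      exact ih

lemma aux_measSet {Ω : Type*} {mΩ : MeasurableSpace Ω} (W : ℕ → Ω → ℝ)
    (hW : ∀ k, Measurable (W k)) (n : ℕ) :
    MeasurableSet {ω | ∀ k, 0 < k → k < n → W k ω ≤ 0} := by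
  have : {ω | ∀ k, 0 < k → k < n → W k ω ≤ 0}
      = ⋂ k, ⋂ (_ : 0 < k), ⋂ (_ : k < n), {ω | W k ω ≤ 0} := by
    ext ω; simp [Set.mem_iInter]
  rw [this]
  exact MeasurableSet.iInter fun k => MeasurableSet.iInter fun _ =>
    MeasurableSet.iInter fun _ => measurableSet_le (hW k) measurable_const

lemma aux_indep {Ω : Type*} {mΩ : MeasurableSpace Ω} (μ : Measure Ω)
    (X : ℕ → Ω → ℝ) (hXmeas : ∀ i, Measurable (X i))
    (hindep : iIndepFun X μ)
    (m : ℕ) (g F : ℝ → ℝ) (hg : Measurable g) (hF : Measurable F) (n : ℕ) (hn : n ≤ m + 1) :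
    IndepFun (fun ω => g (X m ω))
      ((({ω | ∀ k, 0 < k → k < n → (∑ i ∈ Finset.range k, F (X i ω)) ≤ 0}) : Set Ω).indicator
        (fun _ => (1 : ℝ))) μ := by
  classical
  set B : Set ({i // i ∈ Finset.range m} → ℝ) :=
    {v | ∀ k, 0 < k → k < n →
      (∑ i ∈ (Finset.range m).attach, if (i : ℕ) < k then F (v i) else 0) ≤ 0} with hB
  have hBmeas : MeasurableSet B := by
    have hBeq : B = ⋂ k, {v : {i // i ∈ Finset.range m} → ℝ | 0 < k → k < n →
        (∑ i ∈ (Finset.range m).attach, if (i : ℕ) < k then F (v i) else 0) ≤ 0} := by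
      ext v; simp [hB, Set.mem_iInter]
    rw [hBeq]
    refine MeasurableSet.iInter fun k => ?_
    by_cases hk : 0 < k ∧ k < n
    · have heq : {v : {i // i ∈ Finset.range m} → ℝ | 0 < k → k < n →
          (∑ i ∈ (Finset.range m).attach, if (i : ℕ) < k then F (v i) else 0) ≤ 0}
          = {v | (∑ i ∈ (Finset.range m).attach, if (i : ℕ) < k then F (v i) else 0) ≤ 0} := by
        ext v; simp [hk.1, hk.2]
      rw [heq]
      refine measurableSet_le ?_ measurable_const
      refine Finset.measurable_sum _ fun i _ => ?_
      by_cases hik : (i : ℕ) < k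
      · simp only [hik, ↓reduceIte]; exact hF.comp (measurable_pi_apply i)
      · simpa [hik] using measurable_const
    · have heq : {v : {i // i ∈ Finset.range m} → ℝ | 0 < k → k < n →
          (∑ i ∈ (Finset.range m).attach, if (i : ℕ) < k then F (v i) else 0) ≤ 0}
          = Set.univ := by
        ext v; simp only [Set.mem_setOf_eq, Set.mem_univ, iff_true]
        intro h1 h2; exact absurd ⟨h1, h2⟩ hk
      rw [heq]; exact MeasurableSet.univ
  have hsum : ∀ (ω : Ω) (k : ℕ), k ≤ m →
      (∑ i ∈ (Finset.range m).attach, if (i : ℕ) < k then F (X (i : ℕ) ω) else 0)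
        = ∑ i ∈ Finset.range k, F (X i ω) := by
    intro ω k hk
    rw [Finset.sum_attach (Finset.range m) (fun i => if i < k then F (X i ω) else 0),
      ← Finset.sum_filter]
    congr 1
    ext i
    simp only [Finset.mem_filter, Finset.mem_range]
    omega
  have hpre : ({ω | ∀ k, 0 < k → k < n → (∑ i ∈ Finset.range k, F (X i ω)) ≤ 0} : Set Ω)
      = (fun ω (i : {i // i ∈ Finset.range m}) => X (i : ℕ) ω) ⁻¹' B := by
    ext ω
    simp only [Set.mem_setOf_eq, Set.mem_preimage, hB]
    constructor
    · intro h k hk hkn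
      rw [hsum ω k (by omega)]
      exact h k hk hkn
    · intro h k hk hkn
      have := h k hk hkn
      rwa [hsum ω k (by omega)] at this
  have hind := hindep.indepFun_finset {m} (Finset.range m)
    (by simp [Finset.disjoint_singleton_left]) hXmeas
  have hφ : Measurable fun v : {i // i ∈ ({m} : Finset ℕ)} → ℝ =>
      g (v ⟨m, Finset.mem_singleton_self m⟩) := hg.comp (measurable_pi_apply _)
  have hψ : Measurable (B.indicator (fun _ => (1 : ℝ))) := measurable_const.indicator hBmeas
  have hcomp := hind.comp hφ hψ
  have hleft : (fun v : {i // i ∈ ({m} : Finset ℕ)} → ℝ => g (v ⟨m, Finset.mem_singleton_self m⟩))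
      ∘ (fun a (i : {i // i ∈ ({m} : Finset ℕ)}) => X (i : ℕ) a) = fun ω => g (X m ω) := rfl
  have hright : (B.indicator (fun _ => (1 : ℝ)))
      ∘ (fun a (i : {i // i ∈ Finset.range m}) => X (i : ℕ) a)
      = (((fun ω (i : {i // i ∈ Finset.range m}) => X (i : ℕ) ω) ⁻¹' B).indicator
          (fun _ => (1 : ℝ))) := by
    funext ω
    simp only [Function.comp_apply, Set.indicator_apply, Set.mem_preimage]
  rw [hpre]
  rw [hleft, hright] at hcomp
  exact hcomp

lemma indep_setIntegral {Ω : Type*} {mΩ : MeasurableSpace Ω} (μ : Measure Ω)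
    [IsProbabilityMeasure μ] (f : Ω → ℝ) (A : Set Ω)
    (hA : MeasurableSet A) (hf : Integrable f μ)
    (hind : IndepFun f (A.indicator (fun _ => (1 : ℝ))) μ) :
    ∫ ω in A, f ω ∂μ = (μ A).toReal * ∫ ω, f ω ∂μ := by
  classical
  have h1 : ∫ ω in A, f ω ∂μ = ∫ ω, A.indicator f ω ∂μ := (integral_indicator hA).symm
  have h2 : A.indicator f = f * A.indicator (fun _ => (1 : ℝ)) := by
    funext ω
    by_cases h : ω ∈ A <;> simp [Set.indicator_apply, h]
  rw [h1, h2, hind.integral_mul_eq_mul_integral hf.aestronglyMeasurable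
    ((integrable_const (1 : ℝ)).indicator hA).aestronglyMeasurable]
  rw [integral_indicator_const (1 : ℝ) hA]
  simp [mul_comm, Measure.real]

lemma indep_setLIntegral {Ω : Type*} {mΩ : MeasurableSpace Ω} (μ : Measure Ω)
    [IsProbabilityMeasure μ] (f : Ω → ℝ) (A : Set Ω)
    (hA : MeasurableSet A) (hf : Integrable f μ) (hf0 : ∀ ω, 0 ≤ f ω)
    (hind : IndepFun f (A.indicator (fun _ => (1 : ℝ))) μ) :
    ∫⁻ ω in A, ENNReal.ofReal (f ω) ∂μ = μ A * ENNReal.ofReal (∫ ω, f ω ∂μ) := by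
  have h1 : ∫⁻ ω in A, ENNReal.ofReal (f ω) ∂μ = ENNReal.ofReal (∫ ω in A, f ω ∂μ) :=
    (ofReal_integral_eq_lintegral_ofReal (hf.restrict)
      (Filter.Eventually.of_forall hf0)).symm
  rw [h1, indep_setIntegral μ f A hA hf hind, ENNReal.ofReal_mul ENNReal.toReal_nonneg,
    ENNReal.ofReal_toReal (measure_ne_top μ A)]

set_option maxHeartbeats 2000000 in
/-- for a random walk with i.i.d. increments of positive finite mean and first
strict ascending ladder epoch `σ`, `E[(S₁⁺)²] < ∞` iff `E[S_σ²] < ∞`. -/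
theorem ladder_height_square_integrable_iff
    {Ω : Type*} {mΩ : MeasurableSpace Ω} (μ : Measure Ω) [IsProbabilityMeasure μ]
    (X : ℕ → Ω → ℝ) (hXmeas : ∀ i, Measurable (X i))
    (hindep : iIndepFun X μ)
    (hident : ∀ i, IdentDistrib (X i) (X 0) μ μ)
    (hint : Integrable (X 0) μ) (hmean : 0 < ∫ ω, X 0 ω ∂μ)
    (S : ℕ → Ω → ℝ) (hS : ∀ n ω, S n ω = ∑ i ∈ Finset.range n, X i ω)
    (σ : Ω → ℕ) (hσ : ∀ ω, σ ω = sInf {n : ℕ | 0 < n ∧ 0 < S n ω}) :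
    Integrable (fun ω => (max (X 0 ω) 0) ^ 2) μ
      ↔ Integrable (fun ω => (S (σ ω) ω) ^ 2) μ := by
  classical
  have hS0 : ∀ ω, S 0 ω = 0 := fun ω => by simp [hS]
  have hSsucc : ∀ n ω, S (n + 1) ω = S n ω + X n ω := fun n ω => by
    simp [hS, Finset.sum_range_succ]
  have hSmeas : ∀ n, Measurable (S n) := by
    intro n
    have : S n = fun ω => ∑ i ∈ Finset.range n, X i ω := funext fun ω => hS n ω
    rw [this]; exact Finset.measurable_sum _ fun i _ => hXmeas i
  have hσspec : ∀ ω n, σ ω = n + 1 →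
      0 < S (n + 1) ω ∧ ∀ k, 0 < k → k < n + 1 → S k ω ≤ 0 := by
    intro ω n h
    have hinf : sInf {j : ℕ | 0 < j ∧ 0 < S j ω} = n + 1 := by rw [← hσ ω, h]
    have hne : {j : ℕ | 0 < j ∧ 0 < S j ω}.Nonempty := by
      by_contra hc
      rw [Set.not_nonempty_iff_eq_empty] at hc
      rw [hc, Nat.sInf_empty] at hinf
      omega
    have hmem := Nat.sInf_mem hne
    rw [hinf] at hmem
    refine ⟨hmem.2, ?_⟩
    intro k hk hkn
    by_contra hgt
    push_neg at hgt
    have hkmem : k ∈ {j : ℕ | 0 < j ∧ 0 < S j ω} := ⟨hk, hgt⟩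
    have := Nat.sInf_le hkmem
    omega
  have hσlevel : ∀ n : ℕ, MeasurableSet {ω | σ ω = n} := by
    intro n
    match n with
    | 0 =>
      have heq : {ω | σ ω = 0} = ⋂ k, ⋂ (_ : 0 < k), {ω | S k ω ≤ 0} := by
        ext ω
        simp only [Set.mem_setOf_eq, Set.mem_iInter]
        constructor
        · intro h k hk
          by_contra hgt
          push_neg at hgt
          have hne : {j : ℕ | 0 < j ∧ 0 < S j ω}.Nonempty := ⟨k, hk, hgt⟩
          have hmem := Nat.sInf_mem hne
          rw [← hσ ω, h] at hmem
          exact absurd hmem.1 (lt_irrefl 0)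
        · intro h
          rw [hσ ω]
          have hempty : {j : ℕ | 0 < j ∧ 0 < S j ω} = ∅ := by
            ext j
            simp only [Set.mem_setOf_eq, Set.mem_empty_iff_false, iff_false, not_and, not_lt]
            intro hj
            exact h j hj
          rw [hempty, Nat.sInf_empty]
      rw [heq]
      exact MeasurableSet.iInter fun k => MeasurableSet.iInter fun _ =>
        measurableSet_le (hSmeas k) measurable_const
    | Nat.succ n =>
      have heq : {ω | σ ω = n + 1}
          = {ω | 0 < S (n + 1) ω} ∩ {ω | ∀ k, 0 < k → k < n + 1 → S k ω ≤ 0} := by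
        ext ω
        simp only [Set.mem_setOf_eq, Set.mem_inter_iff]
        constructor
        · intro h
          exact ⟨(hσspec ω n h).1, (hσspec ω n h).2⟩
        · rintro ⟨h1, h2⟩
          rw [hσ ω]
          have hmem : (n + 1) ∈ {j : ℕ | 0 < j ∧ 0 < S j ω} := ⟨Nat.succ_pos n, h1⟩
          have hle := Nat.sInf_le hmem
          have hmem' := Nat.sInf_mem (⟨n + 1, hmem⟩ : Set.Nonempty _)
          by_contra hneq
          have hlt : sInf {j : ℕ | 0 < j ∧ 0 < S j ω} < n + 1 := lt_of_le_of_ne hle hneq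
          have := h2 _ hmem'.1 hlt
          exact absurd hmem'.2 (not_lt.2 this)
      rw [heq]
      exact (measurableSet_lt measurable_const (hSmeas (n + 1))).inter
        (aux_measSet S hSmeas (n + 1))
  have hσmeas : Measurable σ := measurable_to_countable' fun n => hσlevel n
  have hSσmeas : Measurable fun ω => S (σ ω) ω := by
    have h1 : Measurable fun p : Ω × ℕ => S p.2 p.1 :=
      measurable_from_prod_countable_left fun n => hSmeas n
    exact h1.comp (measurable_id.prodMk hσmeas)
  constructor
  · -- hard direction
    intro h2
    -- choose the truncation level c
    have habs : ∀ (N : ℕ) (x : ℝ), |min x (N : ℝ)| ≤ |x| := by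
      intro N x
      rcases le_or_gt x (N : ℝ) with h | h
      · rw [min_eq_left h]
      · rw [min_eq_right h.le, abs_of_nonneg (by positivity : (0 : ℝ) ≤ (N : ℝ))]
        calc (N : ℝ) ≤ x := h.le
        _ ≤ |x| := le_abs_self x
    have htend : Filter.Tendsto (fun N : ℕ => ∫ ω, min (X 0 ω) (N : ℝ) ∂μ)
        Filter.atTop (nhds (∫ ω, X 0 ω ∂μ)) := by
      refine tendsto_integral_of_dominated_convergence (fun ω => |X 0 ω|)
        (fun N => ((hXmeas 0).min measurable_const).aestronglyMeasurable) hint.abs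
        (fun N => Filter.Eventually.of_forall fun ω => by
          rw [Real.norm_eq_abs]; exact habs N (X 0 ω))
        (Filter.Eventually.of_forall fun ω => ?_)
      have hev : ∀ᶠ N : ℕ in Filter.atTop, min (X 0 ω) (N : ℝ) = X 0 ω := by
        filter_upwards [Filter.eventually_ge_atTop ⌈X 0 ω⌉₊] with N hN
        refine min_eq_left ?_
        calc X 0 ω ≤ (⌈X 0 ω⌉₊ : ℝ) := Nat.le_ceil _
        _ ≤ (N : ℝ) := Nat.cast_le.2 hN
      exact Filter.Tendsto.congr' (hev.mono fun N h => h.symm) tendsto_const_nhds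
    obtain ⟨N₀, hN₀⟩ := ((tendsto_order.1 htend).1 0 hmean).exists
    set c : ℝ := (N₀ : ℝ) with hcdef
    have hc0 : 0 ≤ c := Nat.cast_nonneg N₀
    set m' : ℝ := ∫ ω, min (X 0 ω) c ∂μ with hm'def
    have hm' : 0 < m' := hN₀
    have hminmeas : Measurable fun x : ℝ => min x c := measurable_id.min measurable_const
    have hXc0int : Integrable (fun ω => min (X 0 ω) c) μ := by
      refine Integrable.mono' (hint.abs.add (integrable_const |c|))
        ((hXmeas 0).min measurable_const).aestronglyMeasurable
        (Filter.Eventually.of_forall fun ω => ?_)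
      simp only [Pi.add_apply, Real.norm_eq_abs]
      rcases le_or_gt (X 0 ω) c with h | h
      · rw [min_eq_left h]
        have := abs_nonneg c
        linarith
      · rw [min_eq_right h.le]
        have := abs_nonneg (X 0 ω)
        linarith
    have hXcid : ∀ i, IdentDistrib (fun ω => min (X i ω) c) (fun ω => min (X 0 ω) c) μ μ :=
      fun i => (hident i).comp hminmeas
    have hXc_int : ∀ i, Integrable (fun ω => min (X i ω) c) μ :=
      fun i => (hXcid i).integrable_iff.2 hXc0int
    have hXc_avg : ∀ i, ∫ ω, min (X i ω) c ∂μ = m' := fun i => (hXcid i).integral_eq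
    -- events
    set A : ℕ → Set Ω := fun n => {ω | ∀ k, 0 < k → k < n → S k ω ≤ 0} with hAdef
    set A' : ℕ → Set Ω := fun n => {ω | ∀ k, 0 < k → k < n →
      (∑ i ∈ Finset.range k, min (X i ω) c) ≤ 0} with hA'def
    have hAmeas : ∀ n, MeasurableSet (A n) := fun n => aux_measSet S hSmeas n
    have hA'meas : ∀ n, MeasurableSet (A' n) :=
      fun n => aux_measSet (fun k ω => ∑ i ∈ Finset.range k, min (X i ω) c)
        (fun k => Finset.measurable_sum _ fun i _ => (hXmeas i).min measurable_const) n
    have hAA' : ∀ n, A n ⊆ A' n := by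
      intro n ω hω k hk hkn
      calc ∑ i ∈ Finset.range k, min (X i ω) c ≤ ∑ i ∈ Finset.range k, X i ω :=
        Finset.sum_le_sum fun i _ => min_le_left _ _
      _ = S k ω := (hS k ω).symm
      _ ≤ 0 := hω k hk hkn
    -- Wald-type bound : ∑_{n=1}^N μ(A' n) ≤ c / m'
    have hkey : ∀ N : ℕ, ∑ n ∈ Finset.Icc 1 N, (μ (A' n)).toReal ≤ c / m' := by
      intro N
      have hterm : ∀ n : ℕ, 1 ≤ n →
          ∫ ω, (A' n).indicator (fun ω' => min (X (n - 1) ω') c) ω ∂μ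
          = m' * (μ (A' n)).toReal := by
        intro n hn
        have hindn : IndepFun (fun ω => min (X (n - 1) ω) c)
            ((A' n).indicator (fun _ => (1 : ℝ))) μ := by
          have := aux_indep μ X hXmeas hindep (n - 1) (fun x => min x c) (fun x => min x c)
            hminmeas hminmeas n (by omega)
          exact this
        rw [integral_indicator (hA'meas n),
          indep_setIntegral μ _ _ (hA'meas n) (hXc_int (n - 1)) hindn, hXc_avg (n - 1)]
        ring
      have hsum_int : ∀ n ∈ Finset.Icc 1 N,
          Integrable ((A' n).indicator (fun ω => min (X (n - 1) ω) c)) μ :=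
        fun n _ => (hXc_int (n - 1)).indicator (hA'meas n)
      have hswap : ∑ n ∈ Finset.Icc 1 N, m' * (μ (A' n)).toReal
          = ∫ ω, ∑ n ∈ Finset.Icc 1 N,
              (A' n).indicator (fun ω' => min (X (n - 1) ω') c) ω ∂μ := by
        rw [integral_finset_sum _ hsum_int]
        exact Finset.sum_congr rfl fun n hn => (hterm n (Finset.mem_Icc.1 hn).1).symm
      have hptwise : ∀ ω, ∑ n ∈ Finset.Icc 1 N,
          (A' n).indicator (fun ω' => min (X (n - 1) ω') c) ω ≤ c := by
        intro ω
        have hw := wald_pointwise (fun i => min (X i ω) c) c hc0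
          (fun i => min_le_right _ _) N
        refine le_trans (le_of_eq (Finset.sum_congr rfl fun n _ => ?_)) hw
        by_cases hω : ω ∈ A' n
        · rw [Set.indicator_of_mem hω,
            if_pos (show ∀ k, 0 < k → k < n → (∑ i ∈ Finset.range k, min (X i ω) c) ≤ 0
              from hω), mul_one]
        · rw [Set.indicator_of_notMem hω,
            if_neg (show ¬∀ k, 0 < k → k < n → (∑ i ∈ Finset.range k, min (X i ω) c) ≤ 0
              from hω), mul_zero]
      have hle : ∑ n ∈ Finset.Icc 1 N, m' * (μ (A' n)).toReal ≤ c := by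
        rw [hswap]
        calc ∫ ω, ∑ n ∈ Finset.Icc 1 N,
              (A' n).indicator (fun ω' => min (X (n - 1) ω') c) ω ∂μ
            ≤ ∫ _, c ∂μ :=
              integral_mono (integrable_finset_sum _ hsum_int) (integrable_const c)
                fun ω => hptwise ω
        _ = c := by simp
      rw [← Finset.mul_sum] at hle
      rw [le_div_iff₀ hm', mul_comm]
      exact hle
    -- transfer to A and ENNReal
    have htsum : ∑' n : ℕ, μ (A (n + 1)) ≤ ENNReal.ofReal (c / m') := by
      rw [ENNReal.tsum_eq_iSup_sum]
      refine iSup_le fun s => ?_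
      obtain ⟨N, hN⟩ : ∃ N, s ⊆ Finset.range N :=
        ⟨(s.sup id) + 1, fun i hi => Finset.mem_range.2 (by
          have := Finset.le_sup (f := id) hi; simp at this; omega)⟩
      calc ∑ n ∈ s, μ (A (n + 1)) ≤ ∑ n ∈ Finset.range N, μ (A (n + 1)) :=
        Finset.sum_le_sum_of_subset hN
      _ ≤ ENNReal.ofReal (c / m') := by
        rw [← ENNReal.ofReal_toReal (a := ∑ n ∈ Finset.range N, μ (A (n + 1)))
          (by exact (ENNReal.sum_lt_top.2 fun n _ => measure_lt_top μ _).ne)]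
        refine ENNReal.ofReal_le_ofReal ?_
        rw [ENNReal.toReal_sum fun n _ => measure_ne_top μ _]
        have hshift : ∀ (f : ℕ → ℝ) (M : ℕ),
            ∑ n ∈ Finset.Icc 1 M, f n = ∑ n ∈ Finset.range M, f (n + 1) := by
          intro f M
          induction M with
          | zero => simp
          | succ M ihM => rw [Finset.sum_Icc_succ_top (by omega), ihM, Finset.sum_range_succ]
        calc ∑ n ∈ Finset.range N, (μ (A (n + 1))).toReal
            = ∑ n ∈ Finset.Icc 1 N, (μ (A n)).toReal :=
              (hshift (fun n => (μ (A n)).toReal) N).symm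
        _ ≤ ∑ n ∈ Finset.Icc 1 N, (μ (A' n)).toReal :=
              Finset.sum_le_sum fun n _ => ENNReal.toReal_mono (measure_ne_top μ _)
                (measure_mono (hAA' n))
        _ ≤ c / m' := hkey N
    -- integrability of squares of positive parts
    have hsqid : ∀ n, IdentDistrib (fun ω => (max (X n ω) 0) ^ 2)
        (fun ω => (max (X 0 ω) 0) ^ 2) μ μ :=
      fun n => (hident n).comp ((measurable_id.max measurable_const).pow_const 2)
    have hsq_int : ∀ n, Integrable (fun ω => (max (X n ω) 0) ^ 2) μ :=
      fun n => (hsqid n).integrable_iff.2 h2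
    set K : ℝ := ∫ ω, (max (X 0 ω) 0) ^ 2 ∂μ with hKdef
    have hKn : ∀ n, ∫ ω, (max (X n ω) 0) ^ 2 ∂μ = K := fun n => (hsqid n).integral_eq
    -- independence for the untruncated events
    have hindA : ∀ n : ℕ, IndepFun (fun ω => (max (X n ω) 0) ^ 2)
        ((A (n + 1)).indicator (fun _ => (1 : ℝ))) μ := by
      intro n
      have heq : A (n + 1)
          = {ω | ∀ k, 0 < k → k < n + 1 → (∑ i ∈ Finset.range k, X i ω) ≤ 0} := by
        ext ω
        simp only [hAdef, Set.mem_setOf_eq]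
        constructor
        · intro h k hk hkn; rw [← hS k ω]; exact h k hk hkn
        · intro h k hk hkn; rw [hS k ω]; exact h k hk hkn
      rw [heq]
      exact aux_indep μ X hXmeas hindep n (fun x => (max x 0) ^ 2) (fun x => x)
        ((measurable_id.max measurable_const).pow_const 2) measurable_id (n + 1) le_rfl
    -- final lintegral computation
    refine ⟨(hSσmeas.pow_const 2).aestronglyMeasurable, ?_⟩
    rw [hasFiniteIntegral_iff_ofReal (Filter.Eventually.of_forall fun ω => sq_nonneg _)]
    have hcover : (⋃ n : ℕ, {ω | σ ω = n}) = Set.univ := by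
      ext ω
      simp only [Set.mem_iUnion, Set.mem_setOf_eq, Set.mem_univ, iff_true]
      exact ⟨σ ω, rfl⟩
    have hdisj : Pairwise (Function.onFun Disjoint fun n => {ω | σ ω = n}) := by
      intro i j hij
      refine Set.disjoint_left.2 fun ω hi hj => hij ?_
      simp only [Set.mem_setOf_eq] at hi hj
      rw [← hi, ← hj]
    have hsplit : ∫⁻ ω, ENNReal.ofReal ((S (σ ω) ω) ^ 2) ∂μ
        = ∑' n : ℕ, ∫⁻ ω in {ω | σ ω = n}, ENNReal.ofReal ((S (σ ω) ω) ^ 2) ∂μ := by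
      rw [← setLIntegral_univ, ← hcover, lintegral_iUnion hσlevel hdisj]
    rw [hsplit]
    set G : ℕ → ℝ≥0∞ := fun n => if n = 0 then 0 else μ (A n) * ENNReal.ofReal K with hGdef
    have hbound : ∀ n : ℕ,
        ∫⁻ ω in {ω | σ ω = n}, ENNReal.ofReal ((S (σ ω) ω) ^ 2) ∂μ ≤ G n := by
      intro n
      match n with
      | 0 =>
        have h0 : ∫⁻ ω in {ω | σ ω = 0}, ENNReal.ofReal ((S (σ ω) ω) ^ 2) ∂μ = 0 := by
          rw [setLIntegral_congr_fun (hσlevel 0)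
            (fun ω hω => ?_)]
          · exact lintegral_zero
          · show ENNReal.ofReal ((S (σ ω) ω) ^ 2) = (fun _ => (0 : ℝ≥0∞)) ω
            have : σ ω = 0 := hω
            rw [this, hS0]
            simp
        rw [h0]
        simp [hGdef]
      | Nat.succ n =>
        have hstep1 : ∫⁻ ω in {ω | σ ω = n + 1}, ENNReal.ofReal ((S (σ ω) ω) ^ 2) ∂μ
            ≤ ∫⁻ ω in {ω | σ ω = n + 1}, ENNReal.ofReal ((max (X n ω) 0) ^ 2) ∂μ := by
          refine setLIntegral_mono (ENNReal.measurable_ofReal.comp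
            (((hXmeas n).max measurable_const).pow_const 2)) fun ω hω => ?_
          have hω' : σ ω = n + 1 := hω
          obtain ⟨hpos, hprev⟩ := hσspec ω n hω'
          have hSn : S n ω ≤ 0 := by
            rcases Nat.eq_zero_or_pos n with h | h
            · rw [h, hS0]
            · exact hprev n h (by omega)
          have hle1 : S (n + 1) ω ≤ X n ω := by
            rw [hSsucc n ω]; linarith
          have hle2 : S (n + 1) ω ≤ max (X n ω) 0 := le_trans hle1 (le_max_left _ _)
          rw [hω']
          refine ENNReal.ofReal_le_ofReal ?_
          exact pow_le_pow_left₀ hpos.le hle2 2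
        have hsub : {ω | σ ω = n + 1} ⊆ A (n + 1) := fun ω hω => (hσspec ω n hω).2
        have hstep2 : ∫⁻ ω in {ω | σ ω = n + 1}, ENNReal.ofReal ((max (X n ω) 0) ^ 2) ∂μ
            ≤ ∫⁻ ω in A (n + 1), ENNReal.ofReal ((max (X n ω) 0) ^ 2) ∂μ :=
          lintegral_mono_set hsub
        have hstep3 : ∫⁻ ω in A (n + 1), ENNReal.ofReal ((max (X n ω) 0) ^ 2) ∂μ
            = μ (A (n + 1)) * ENNReal.ofReal K := by
          rw [indep_setLIntegral μ _ _ (hAmeas (n + 1)) (hsq_int n)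
            (fun ω => sq_nonneg _) (hindA n), hKn n]
        have : G (n + 1) = μ (A (n + 1)) * ENNReal.ofReal K := by simp [hGdef]
        rw [this]
        exact le_trans hstep1 (le_trans hstep2 (le_of_eq hstep3))
    calc ∑' n : ℕ, ∫⁻ ω in {ω | σ ω = n}, ENNReal.ofReal ((S (σ ω) ω) ^ 2) ∂μ
        ≤ ∑' n : ℕ, G n := ENNReal.tsum_le_tsum hbound
    _ < ⊤ := by
        rw [tsum_eq_zero_add' ENNReal.summable]
        have hG0 : G 0 = 0 := by simp [hGdef]
        have hGs : ∀ n : ℕ, G (n + 1) = μ (A (n + 1)) * ENNReal.ofReal K := by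
          intro n; simp [hGdef]
        rw [hG0, zero_add]
        have : ∑' n : ℕ, G (n + 1) = (∑' n : ℕ, μ (A (n + 1))) * ENNReal.ofReal K := by
          rw [← ENNReal.tsum_mul_right]
          exact tsum_congr fun n => hGs n
        rw [this]
        exact lt_of_le_of_lt (mul_le_mul_left htsum _)
          (ENNReal.mul_lt_top ENNReal.ofReal_lt_top ENNReal.ofReal_lt_top)
  · -- easy direction
    intro h2
    have hmeas1 : AEStronglyMeasurable (fun ω => (max (X 0 ω) 0) ^ 2) μ :=
      (((hXmeas 0).max measurable_const).pow_const 2).aestronglyMeasurable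
    refine h2.mono hmeas1 (Filter.Eventually.of_forall fun ω => ?_)
    rw [Real.norm_eq_abs, Real.norm_eq_abs, abs_of_nonneg (sq_nonneg _),
      abs_of_nonneg (sq_nonneg _)]
    by_cases h : 0 < X 0 ω
    · have h1mem : (1 : ℕ) ∈ {n : ℕ | 0 < n ∧ 0 < S n ω} :=
        ⟨Nat.one_pos, by rw [hS]; simpa using h⟩
      have hσ1 : σ ω = 1 := by
        rw [hσ ω]
        refine le_antisymm (Nat.sInf_le h1mem) ?_
        rcases Nat.eq_zero_or_pos (sInf {n : ℕ | 0 < n ∧ 0 < S n ω}) with h0 | h0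
        · exfalso
          have hmem := Nat.sInf_mem (⟨1, h1mem⟩ : Set.Nonempty _)
          rw [h0] at hmem
          exact absurd hmem.1 (lt_irrefl 0)
        · omega
      rw [hσ1, hS 1 ω, Finset.sum_range_one, max_eq_left h.le]
    · rw [max_eq_right (not_lt.1 h)]
      simpa using sq_nonneg (S (σ ω) ω)
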